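/- arXiv:1609.09708 — 12 statements merged into one kernel-verified Lean document; each statement's English description precedes it below -/
import Mathlib

section
/- In any basic lattice B, distributivity holds in the form: z ⪯ x ∨ y if and only if z ⪯ (x ∧ z) ∨ (y ∧ z). -/
/-- A basic lattice: a transitive relation `prec` (≺) with minimum `zero`,
whose reflexivization `ple` (⪯) is a lattice order with meet `inf` and join `sup`,
satisfying coinitiality, cofinality, interpolation, multiplicativity, additivity,
decomposition and complementation. -/
structure BasicLattice (B : Type) where
  prec : B → B → Prop
  zero : B
  inf : B → B → B
  sup : B → B → B
  trans : ∀ {x y z : B}, prec x y → prec y z → prec x z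
  min : ∀ x, prec zero x
  antisymm : ∀ x y, (∀ z, prec z x → prec z y) → (∀ z, prec z y → prec z x) → x = y
  inf_le_left : ∀ x y z, prec z (inf x y) → prec z x
  inf_le_right : ∀ x y z, prec z (inf x y) → prec z y
  le_inf : ∀ x y w, (∀ z, prec z w → prec z x) → (∀ z, prec z w → prec z y) →
    ∀ z, prec z w → prec z (inf x y)
  le_sup_left : ∀ x y z, prec z x → prec z (sup x y)
  le_sup_right : ∀ x y z, prec z y → prec z (sup x y)
  sup_le : ∀ x y w, (∀ z, prec z x → prec z w) → (∀ z, prec z y → prec z w) →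
    ∀ z, prec z (sup x y) → prec z w
  coinit : ∀ x, x ≠ zero → ∃ z, z ≠ zero ∧ prec z x
  cofin : ∀ x, ∃ y, prec x y
  interp : ∀ x y, prec x y → ∃ z, prec x z ∧ prec z y
  mult : ∀ x x' y y', prec x x' → prec y y' → prec (inf x y) (inf x' y')
  add : ∀ x x' y y', prec x x' → prec y y' → prec (sup x y) (sup x' y')
  decomp : ∀ x y z, prec z (sup x y) → ∃ x' y', prec x' x ∧ prec y' y ∧ z = sup x' y'
  compl : ∀ x y z, prec x y → prec y z → ∃ w, inf w x = zero ∧ sup w y = z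

/-- The reflexivization ⪯ of ≺. -/
def BasicLattice.ple {B : Type} (L : BasicLattice B) (x y : B) : Prop :=
  ∀ z, L.prec z x → L.prec z y


/-- Distributivity in a basic lattice: z ⪯ x ∨ y iff z ⪯ (x ∧ z) ∨ (y ∧ z). -/
theorem basicLattice_distributivity {B : Type} (L : BasicLattice B) (x y z : B) :
    L.ple z (L.sup x y) ↔ L.ple z (L.sup (L.inf x z) (L.inf y z)) := by

  constructor
  · intro h w hw
    obtain ⟨x', y', hx', hy', hw'⟩ := L.decomp x y w (h w hw)
    -- helper: if a ⪯ w and w ≺ z then a ≺ z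
    have key : ∀ a : B, (∀ u, L.prec u a → L.prec u w) → L.prec a z := by
      intro a ha
      obtain ⟨t, hat⟩ := L.cofin a
      have h1 : L.prec (L.inf a w) (L.inf t z) := L.mult a t w z hat hw
      have heq : L.inf a w = a :=
        L.antisymm _ _ (fun u hu => L.inf_le_left a w u hu)
          (fun u hu => L.le_inf a w a (fun v hv => hv) ha u hu)
      rw [heq] at h1
      exact L.inf_le_right t z a h1
    have hx'z : L.prec x' z := key x' (fun u hu => hw' ▸ L.le_sup_left x' y' u hu)
    have hy'z : L.prec y' z := key y' (fun u hu => hw' ▸ L.le_sup_right x' y' u hu)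
    have hxi : L.prec x' (L.inf x z) := by
      have heq : L.inf x' x' = x' :=
        L.antisymm _ _ (fun u hu => L.inf_le_left x' x' u hu)
          (fun u hu => L.le_inf x' x' x' (fun v hv => hv) (fun v hv => hv) u hu)
      exact heq ▸ L.mult x' x x' z hx' hx'z
    have hyi : L.prec y' (L.inf y z) := by
      have heq : L.inf y' y' = y' :=
        L.antisymm _ _ (fun u hu => L.inf_le_left y' y' u hu)
          (fun u hu => L.le_inf y' y' y' (fun v hv => hv) (fun v hv => hv) u hu)
      exact heq ▸ L.mult y' y y' z hy' hy'z
    rw [hw']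
    exact L.add x' (L.inf x z) y' (L.inf y z) hxi hyi
  · intro h w hw
    exact L.sup_le (L.inf x z) (L.inf y z) (L.sup x y)
      (fun u hu => L.le_sup_left x y u (L.inf_le_left x z u hu))
      (fun u hu => L.le_sup_right x y u (L.inf_le_left y z u hu))
      w (h w hw)
end

section
/- In any basic lattice B, the 'rather below' characterization holds: x ≺ y if and only if for every z there exists w with w ∧ x = 0 and z ⪯ w ∨ y. -/
/-- Rather below: in a basic lattice, x ≺ y iff for every z there is w ⊥ x
with z ⪯ w ∨ y. -/
theorem basicLattice_ratherBelow {B : Type} (L : BasicLattice B) (x y : B) :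
    L.prec x y ↔ ∀ z : B, ∃ w : B, L.inf w x = L.zero ∧ L.ple z (L.sup w y) := by
  constructor
  · intro hxy z
    obtain ⟨y', hy'⟩ := L.cofin y
    obtain ⟨z', hz'⟩ := L.cofin z
    have hyv : L.prec y (L.sup y' z') := L.le_sup_left y' z' y hy'
    obtain ⟨w, hw0, hws⟩ := L.compl x y (L.sup y' z') hxy hyv
    refine ⟨w, hw0, fun u hu => ?_⟩
    rw [hws]
    exact L.trans hu (L.le_sup_right y' z' z hz')
  · intro h
    obtain ⟨t, ht⟩ := L.cofin x
    obtain ⟨w, hw0, hle⟩ := h t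
    have hx : L.prec x (L.sup w y) := hle x ht
    obtain ⟨w', y', hw', hy', hxe⟩ := L.decomp w y x hx
    have hw'0 : w' = L.zero := by
      apply L.antisymm
      · intro u hu
        have h2 := L.le_inf w x w' (fun v hv => L.trans hv hw')
          (fun v hv => by rw [hxe]; exact L.le_sup_left w' y' v hv) u hu
        rwa [hw0] at h2
      · intro u hu
        exact L.trans hu (L.min w')
    have hxy' : x = y' := by
      apply L.antisymm
      · intro u hu
        rw [hxe, hw'0] at hu
        exact L.sup_le L.zero y' y' (fun v hv => L.trans hv (L.min y'))
          (fun v hv => hv) u hu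
      · intro u hu
        rw [hxe]
        exact L.le_sup_right w' y' u hu
    rw [hxy']
    exact hy'
end

section
/- Let B be a lattice with transitive relation ≺ with minimum 0 whose reflexivization is the lattice order, satisfying cofinality (∀x ∃y, x ≺ y). Then the conjunction of interpolation, multiplicativity, and additivity is equivalent to the conjunction of right auxiliarity (x ⪯ z ≺ y → x ≺ y) and Riesz interpolation (x, x′ ≺ y, y′ → ∃z with x, x′ ≺ z ≺ y, y′). -/
/-- A lattice (with respect to the reflexivization ⪯ of ≺) equipped with a
transitive relation ≺ with minimum 0, satisfying cofinality. -/
structure PreBasicLattice (B : Type) where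
  prec : B → B → Prop
  zero : B
  inf : B → B → B
  sup : B → B → B
  trans : ∀ {x y z : B}, prec x y → prec y z → prec x z
  min : ∀ x, prec zero x
  antisymm : ∀ x y, (∀ z, prec z x → prec z y) → (∀ z, prec z y → prec z x) → x = y
  inf_le_left : ∀ x y z, prec z (inf x y) → prec z x
  inf_le_right : ∀ x y z, prec z (inf x y) → prec z y
  le_inf : ∀ x y w, (∀ z, prec z w → prec z x) → (∀ z, prec z w → prec z y) →
    ∀ z, prec z w → prec z (inf x y)
  le_sup_left : ∀ x y z, prec z x → prec z (sup x y)
  le_sup_right : ∀ x y z, prec z y → prec z (sup x y)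
  sup_le : ∀ x y w, (∀ z, prec z x → prec z w) → (∀ z, prec z y → prec z w) →
    ∀ z, prec z (sup x y) → prec z w
  cofin : ∀ x, ∃ y, prec x y

/-- The reflexivization ⪯ of ≺. -/
def PreBasicLattice.ple {B : Type} (L : PreBasicLattice B) (x y : B) : Prop :=
  ∀ z, L.prec z x → L.prec z y

/-- In a lattice with transitive ≺ and cofinality, interpolation plus
multiplicativity plus additivity is equivalent to right auxiliarity plus
Riesz interpolation. -/
theorem interp_mult_add_iff_rightAux_riesz {B : Type} (L : PreBasicLattice B) :
    ((∀ x y, L.prec x y → ∃ z, L.prec x z ∧ L.prec z y) ∧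
     (∀ x x' y y', L.prec x x' → L.prec y y' → L.prec (L.inf x y) (L.inf x' y')) ∧
     (∀ x x' y y', L.prec x x' → L.prec y y' → L.prec (L.sup x y) (L.sup x' y')))
    ↔
    ((∀ x y z, L.ple x z → L.prec z y → L.prec x y) ∧
     (∀ x x' y y', L.prec x y → L.prec x y' → L.prec x' y → L.prec x' y' →
       ∃ z, L.prec x z ∧ L.prec x' z ∧ L.prec z y ∧ L.prec z y')) := by

  constructor
  · rintro ⟨hint, hmult, hadd⟩
    have raux : ∀ x y z, L.ple x z → L.prec z y → L.prec x y := by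
      intro x y z hxz hzy
      obtain ⟨t, ht⟩ := L.cofin x
      have hx : x = L.inf x z := by
        refine L.antisymm x (L.inf x z) ?_ ?_
        · exact L.le_inf x z x (fun u hu => hu) (fun u hu => hxz u hu)
        · exact fun u hu => L.inf_le_left x z u hu
      have h1 : L.prec (L.inf x z) (L.inf t y) := hmult x t z y ht hzy
      rw [← hx] at h1
      exact L.inf_le_right t y x h1
    refine ⟨raux, ?_⟩
    intro x x' y y' hxy hxy' hx'y hx'y'
    have hx : L.prec x (L.inf y y') := by
      have := hmult x y x y' hxy hxy'
      have hxx : x = L.inf x x := by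
        refine L.antisymm x (L.inf x x) ?_ ?_
        · exact L.le_inf x x x (fun u hu => hu) (fun u hu => hu)
        · exact fun u hu => L.inf_le_left x x u hu
      rwa [← hxx] at this
    have hx' : L.prec x' (L.inf y y') := by
      have := hmult x' y x' y' hx'y hx'y'
      have hxx : x' = L.inf x' x' := by
        refine L.antisymm x' (L.inf x' x') ?_ ?_
        · exact L.le_inf x' x' x' (fun u hu => hu) (fun u hu => hu)
        · exact fun u hu => L.inf_le_left x' x' u hu
      rwa [← hxx] at this
    have hsup : L.prec (L.sup x x') (L.inf y y') := by
      have := hadd x (L.inf y y') x' (L.inf y y') hx hx'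
      have hyy : L.sup (L.inf y y') (L.inf y y') = L.inf y y' := by
        refine L.antisymm _ _ ?_ ?_
        · exact L.sup_le _ _ _ (fun u hu => hu) (fun u hu => hu)
        · exact fun u hu => L.le_sup_left _ _ u hu
      rwa [hyy] at this
    obtain ⟨w, hw1, hw2⟩ := hint _ _ hsup
    refine ⟨w, ?_, ?_, ?_, ?_⟩
    · exact raux x w (L.sup x x') (fun u hu => L.le_sup_left x x' u hu) hw1
    · exact raux x' w (L.sup x x') (fun u hu => L.le_sup_right x x' u hu) hw1
    · exact L.inf_le_left y y' w hw2
    · exact L.inf_le_right y y' w hw2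
  · rintro ⟨raux, riesz⟩
    refine ⟨?_, ?_, ?_⟩
    · intro x y hxy
      obtain ⟨z, h1, _, h3, _⟩ := riesz x x y y hxy hxy hxy hxy
      exact ⟨z, h1, h3⟩
    · intro x x' y y' hx hy
      have h1 : L.prec (L.inf x y) x' := raux _ _ x (fun u hu => L.inf_le_left x y u hu) hx
      have h2 : L.prec (L.inf x y) y' := raux _ _ y (fun u hu => L.inf_le_right x y u hu) hy
      obtain ⟨z, hz1, _, hz3, hz4⟩ := riesz (L.inf x y) (L.inf x y) x' y' h1 h2 h1 h2
      exact L.le_inf x' y' z (fun u hu => L.trans hu hz3) (fun u hu => L.trans hu hz4)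
        (L.inf x y) hz1
    · intro x x' y y' hx hy
      have h1 : L.prec x (L.sup x' y') := L.le_sup_left x' y' x hx
      have h2 : L.prec y (L.sup x' y') := L.le_sup_right x' y' y hy
      obtain ⟨z, hz1, hz2, hz3, _⟩ := riesz x y (L.sup x' y') (L.sup x' y') h1 h1 h2 h2
      exact raux _ _ z (L.sup_le x y z (fun u hu => L.trans hu hz1)
        (fun u hu => L.trans hu hz2)) hz3
end

section
/- A lattice (B, ⪯) with minimum 0, viewed with ≺ equal to ⪯, is a basic lattice if and only if it is a generalized Boolean algebra, i.e. a distributive, section complemented lattice: for x ⪯ z there exists w with w ∧ x = 0 and w ∨ x = z. -/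
/-- A lattice with minimum, viewed with ≺ = ⪯ (i.e. ≤), is a basic lattice iff
it is a generalized Boolean algebra: distributive and section complemented. -/
theorem basicLattice_reflexive_iff_genBool {B : Type} [Lattice B] [OrderBot B] :
    (∃ L : BasicLattice B, L.prec = (fun x y : B => x ≤ y) ∧ L.zero = ⊥ ∧
      L.inf = (fun x y : B => x ⊓ y) ∧ L.sup = (fun x y : B => x ⊔ y))
    ↔
    ((∀ x y z : B, x ⊓ (y ⊔ z) = (x ⊓ y) ⊔ (x ⊓ z)) ∧
     (∀ x z : B, x ≤ z → ∃ w : B, w ⊓ x = ⊥ ∧ w ⊔ x = z)) := by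
  constructor
  · rintro ⟨L, hp, hz, hi, hs⟩
    constructor
    · intro a b c
      apply le_antisymm
      · have hd := L.decomp b c (a ⊓ (b ⊔ c))
        simp only [hp, hs, hi] at hd
        obtain ⟨b', c', hb', hc', heq⟩ := hd inf_le_right
        have hb'a : b' ≤ a := le_trans (heq ▸ le_sup_left) inf_le_left
        have hc'a : c' ≤ a := le_trans (heq ▸ le_sup_right) inf_le_left
        calc a ⊓ (b ⊔ c) = b' ⊔ c' := heq
          _ ≤ (a ⊓ b) ⊔ (a ⊓ c) :=
            sup_le_sup (le_inf hb'a hb') (le_inf hc'a hc')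
      · exact sup_le (inf_le_inf_left a le_sup_left) (inf_le_inf_left a le_sup_right)
    · intro x z hxz
      have hc := L.compl x x z
      rw [hp, hz, hi, hs] at hc
      exact hc le_rfl hxz
  · rintro ⟨hdist, hcompl⟩
    refine ⟨⟨(· ≤ ·), ⊥, (· ⊓ ·), (· ⊔ ·),
      le_trans, fun x => bot_le,
      fun x y h1 h2 => le_antisymm (h1 x le_rfl) (h2 y le_rfl),
      fun x y z h => le_trans h inf_le_left,
      fun x y z h => le_trans h inf_le_right,
      fun x y w h1 h2 z hz => le_inf (h1 z hz) (h2 z hz),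
      fun x y z h => le_trans h le_sup_left,
      fun x y z h => le_trans h le_sup_right,
      fun x y w h1 h2 z hz => le_trans hz (sup_le (h1 x le_rfl) (h2 y le_rfl)),
      fun x hx => ⟨x, hx, le_rfl⟩,
      fun x => ⟨x, le_rfl⟩,
      fun x y h => ⟨x, le_rfl, h⟩,
      fun x x' y y' h1 h2 => inf_le_inf h1 h2,
      fun x x' y y' h1 h2 => sup_le_sup h1 h2,
      ?_, ?_⟩, rfl, rfl, rfl, rfl⟩
    · intro x y z hz
      refine ⟨z ⊓ x, z ⊓ y, inf_le_right, inf_le_right, ?_⟩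
      show z = z ⊓ x ⊔ z ⊓ y
      rw [← hdist, inf_eq_left.mpr hz]
    · intro x y z hxy hyz
      obtain ⟨w, hw1, hw2⟩ := hcompl y z hyz
      refine ⟨w, le_antisymm ?_ bot_le, hw2⟩
      calc w ⊓ x ≤ w ⊓ y := inf_le_inf_left w hxy
        _ = ⊥ := hw1
end

section
/- Let X be a locally compact Hausdorff space and B a basis of relatively compact open sets closed under finite unions and intersections, with ∅ ∈ B. Define O ⊂⊂ N iff closure(O) ⊆ N. Then B satisfies decomposition: if O ⊂⊂ M ∪ N with M, N ∈ B, then there exist M′, N′ ∈ B with closure(M′) ⊆ M, closure(N′) ⊆ N, and O = M′ ∪ N′. -/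
lemma basic_finset_union {X : Type} [TopologicalSpace X] (B : Set (Set X))
    (hempty : (∅ : Set X) ∈ B)
    (hunion : ∀ O ∈ B, ∀ N ∈ B, O ∪ N ∈ B)
    (s : Finset X) (f : X → Set X) (hf : ∀ x ∈ s, f x ∈ B) :
    (⋃ x ∈ s, f x) ∈ B := by
  classical
  induction s using Finset.induction with
  | empty => simpa using hempty
  | insert _ _ hx ih =>
    rw [Finset.set_biUnion_insert]
    exact hunion _ (hf _ (Finset.mem_insert_self _ _)) _
      (ih fun x hxs => hf x (Finset.mem_insert_of_mem hxs))

lemma exists_basic_between {X : Type} [TopologicalSpace X]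
    [LocallyCompactSpace X] [T2Space X] (B : Set (Set X))
    (hempty : (∅ : Set X) ∈ B)
    (hunion : ∀ O ∈ B, ∀ N ∈ B, O ∪ N ∈ B)
    (hbasis : TopologicalSpace.IsTopologicalBasis B)
    (K U : Set X) (hK : IsCompact K) (hU : IsOpen U) (hKU : K ⊆ U) :
    ∃ V ∈ B, K ⊆ V ∧ closure V ⊆ U := by
  classical
  have hpt : ∀ x : X, x ∈ K → ∃ v, v ∈ B ∧ x ∈ v ∧ closure v ⊆ U := by
    intro x hx
    obtain ⟨L, hLc, hxL, hLU⟩ := exists_compact_between isCompact_singleton hU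
      (Set.singleton_subset_iff.mpr (hKU hx))
    obtain ⟨v, hvB, hxv, hvL⟩ := hbasis.exists_subset_of_mem_open
      (hxL rfl) isOpen_interior
    refine ⟨v, hvB, hxv, ?_⟩
    calc closure v ⊆ closure L := closure_mono (hvL.trans interior_subset)
    _ = L := hLc.isClosed.closure_eq
    _ ⊆ U := hLU
  choose! v hvB hxv hvU using hpt
  obtain ⟨t, htK, hcov⟩ := hK.elim_nhds_subcover v
    (fun x hx => (hbasis.isOpen (hvB x hx)).mem_nhds (hxv x hx))
  refine ⟨⋃ x ∈ t, v x, basic_finset_union B hempty hunion t v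
    (fun x hx => hvB x (htK x hx)), hcov, ?_⟩
  rw [show (⋃ x ∈ t, v x) = ⋃ x ∈ (t : Set X), v x by simp,
    t.finite_toSet.closure_biUnion]
  exact Set.iUnion₂_subset fun x hx => hvU x (htK x hx)

/-- Decomposition for a relatively compact basic sublattice of the open sets of a
locally compact Hausdorff space: if closure O ⊆ M ∪ N with O, M, N ∈ B then
O = M' ∪ N' for some M', N' ∈ B with closure M' ⊆ M and closure N' ⊆ N. -/
theorem basis_decomposition {X : Type} [TopologicalSpace X]
    [LocallyCompactSpace X] [T2Space X]
    (B : Set (Set X))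
    (hopen : ∀ O ∈ B, IsOpen O)
    (hcpt : ∀ O ∈ B, IsCompact (closure O))
    (hempty : (∅ : Set X) ∈ B)
    (hunion : ∀ O ∈ B, ∀ N ∈ B, O ∪ N ∈ B)
    (hinter : ∀ O ∈ B, ∀ N ∈ B, O ∩ N ∈ B)
    (hbasis : TopologicalSpace.IsTopologicalBasis B)
    (O M N : Set X) (hO : O ∈ B) (hM : M ∈ B) (hN : N ∈ B)
    (h : closure O ⊆ M ∪ N) :
    ∃ M' ∈ B, ∃ N' ∈ B, closure M' ⊆ M ∧ closure N' ⊆ N ∧ O = M' ∪ N' := by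
  have hK1 : IsCompact (closure O \ N) := (hcpt O hO).diff (hopen N hN)
  have hK1M : closure O \ N ⊆ M := fun x hx => (h hx.1).resolve_right hx.2
  obtain ⟨M'', hM''B, hKM'', hclM''⟩ := exists_basic_between B hempty hunion hbasis
    _ M hK1 (hopen M hM) hK1M
  have hK2 : IsCompact (closure O \ M'') := (hcpt O hO).diff (hbasis.isOpen hM''B)
  have hK2N : closure O \ M'' ⊆ N := by
    intro x hx
    rcases h hx.1 with hxM | hxN
    · by_contra hxN
      exact hx.2 (hKM'' ⟨hx.1, hxN⟩)
    · exact hxN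
  obtain ⟨N'', hN''B, hKN'', hclN''⟩ := exists_basic_between B hempty hunion hbasis
    _ N hK2 (hopen N hN) hK2N
  refine ⟨O ∩ M'', hinter O hO M'' hM''B, O ∩ N'', hinter O hO N'' hN''B,
    (closure_mono Set.inter_subset_right).trans hclM'',
    (closure_mono Set.inter_subset_right).trans hclN'', ?_⟩
  apply Set.Subset.antisymm
  · intro x hx
    by_cases hxM : x ∈ M''
    · exact Or.inl ⟨hx, hxM⟩
    · exact Or.inr ⟨hx, hKN'' ⟨subset_closure hx, hxM⟩⟩
  · rintro x (⟨hx, _⟩ | ⟨hx, _⟩) <;> exact hx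
end

section
/- Let X be a locally compact Hausdorff space and B a basis of relatively compact open sets closed under finite unions and intersections, with ∅ ∈ B. If M, N, O ∈ B satisfy closure(M) ⊆ N and closure(N) ⊆ O, then there exists L ∈ B with L ∩ M = ∅ and L ∪ N = O. -/
/-- Complementation for a relatively compact basic sublattice of the open sets of a
locally compact Hausdorff space: if closure M ⊆ N and closure N ⊆ O with
M, N, O ∈ B then there is L ∈ B with L ∩ M = ∅ and L ∪ N = O. -/
theorem basis_complementation {X : Type} [TopologicalSpace X]
    [LocallyCompactSpace X] [T2Space X]
    (B : Set (Set X))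
    (hopen : ∀ O ∈ B, IsOpen O)
    (hcpt : ∀ O ∈ B, IsCompact (closure O))
    (hempty : (∅ : Set X) ∈ B)
    (hunion : ∀ O ∈ B, ∀ N ∈ B, O ∪ N ∈ B)
    (hinter : ∀ O ∈ B, ∀ N ∈ B, O ∩ N ∈ B)
    (hbasis : TopologicalSpace.IsTopologicalBasis B)
    (M N O : Set X) (hM : M ∈ B) (hN : N ∈ B) (hO : O ∈ B)
    (h1 : closure M ⊆ N) (h2 : closure N ⊆ O) :
    ∃ L ∈ B, L ∩ M = ∅ ∧ L ∪ N = O := by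
  -- finite sUnions of members of B are in B
  have hsU : ∀ t : Set (Set X), t.Finite → t ⊆ B → ⋃₀ t ∈ B := by
    intro t ht
    refine Set.Finite.induction_on (motive := fun s _ => s ⊆ B → ⋃₀ s ∈ B) t ht
      (fun _ => by simpa using hempty) ?_
    intro a s _ _ ih hsub
    rw [Set.sUnion_insert]
    exact hunion _ (hsub (Set.mem_insert _ _)) _
      (ih fun x hx => hsub (Set.mem_insert_of_mem _ hx))
  -- K is compact
  have hK : IsCompact (closure O \ N) := (hcpt O hO).diff (hopen N hN)
  -- cover K by basic sets avoiding closure M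
  have hcov : closure O \ N ⊆ ⋃ U ∈ {U ∈ B | U ⊆ (closure M)ᶜ}, U := by
    intro x hx
    have hxc : x ∈ (closure M)ᶜ := fun hxm => hx.2 (h1 hxm)
    obtain ⟨U, hUB, hxU, hUsub⟩ :=
      hbasis.exists_subset_of_mem_open hxc isClosed_closure.isOpen_compl
    exact Set.mem_biUnion ⟨hUB, hUsub⟩ hxU
  obtain ⟨t, htsub, htfin, htcov⟩ :=
    hK.elim_finite_subcover_image
      (fun U hU => hopen U hU.1) hcov
  have htB : ⋃₀ t ∈ B := hsU t htfin fun U hU => (htsub hU).1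
  have htM : ⋃₀ t ∩ closure M = ∅ := by
    apply Set.eq_empty_of_forall_notMem
    rintro x ⟨⟨U, hUt, hxU⟩, hxM⟩
    exact (htsub hUt).2 hxU hxM
  refine ⟨⋃₀ t ∩ O, hinter _ htB _ hO, ?_, ?_⟩
  · apply Set.eq_empty_of_forall_notMem
    rintro x ⟨⟨hxS, _⟩, hxM⟩
    exact (htM ▸ Set.mem_inter hxS (subset_closure hxM) : x ∈ (∅ : Set X))
  · apply Set.Subset.antisymm
    · rintro x (⟨_, hxO⟩ | hxN)
      · exact hxO
      · exact h2 (subset_closure hxN)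
    · intro x hxO
      by_cases hxN : x ∈ N
      · exact Or.inr hxN
      · refine Or.inl ⟨?_, hxO⟩
        have : x ∈ ⋃ U ∈ t, U := htcov ⟨subset_closure hxO, hxN⟩
        simpa [Set.sUnion_eq_biUnion] using this
end

section
/- In a basic lattice B, if U ⊆ B is ⪯-directed then U^≺ := {y : ∃x ∈ U, x ≺ y} is a ≺-filter (i.e. upward closed under ≻ and ≺-directed downward). Moreover, U is a ≺-filter if and only if U is a ⪯-filter that is ≺-coinitial (U ⊆ U^≺). -/
/-- A ≺-filter: ≻-closed and ≺-directed. -/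
def BasicLattice.IsPrecFilter {B : Type} (L : BasicLattice B) (U : Set B) : Prop :=
  (∀ x y, y ∈ U → L.prec y x → x ∈ U) ∧
  (∀ x y, x ∈ U → y ∈ U → ∃ z ∈ U, L.prec z x ∧ L.prec z y)

/-- A ≺-ultrafilter: a maximal proper ≺-filter. -/
def BasicLattice.IsUltra {B : Type} (L : BasicLattice B) (U : Set B) : Prop :=
  L.IsPrecFilter U ∧ U ≠ Set.univ ∧
  ∀ V, L.IsPrecFilter V → V ≠ Set.univ → U ⊆ V → U = V

/-- A ⪯-filter: ⪰-closed and ⪯-directed. -/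
def BasicLattice.IsPleFilter {B : Type} (L : BasicLattice B) (U : Set B) : Prop :=
  (∀ x y, y ∈ U → L.ple y x → x ∈ U) ∧
  (∀ x y, x ∈ U → y ∈ U → ∃ z ∈ U, L.ple z x ∧ L.ple z y)

lemma BasicLattice.ple_prec {B : Type} (L : BasicLattice B) {z m n : B}
    (hzm : L.ple z m) (hmn : L.prec m n) : L.prec z n := by
  obtain ⟨t, ht⟩ := L.cofin z
  have h1 : L.prec (L.inf z m) (L.inf t n) := L.mult z t m n ht hmn
  have he : L.inf z m = z :=
    L.antisymm (L.inf z m) z (fun w hw => L.inf_le_left _ _ _ hw)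
      (L.le_inf z m z (fun u hu => hu) hzm)
  rw [he] at h1
  exact L.inf_le_right t n z h1

/-- If U is ⪯-directed then U^≺ is a ≺-filter; and U is a ≺-filter iff U is a
≺-coinitial ⪯-filter. -/
theorem precFilter_of_directed_and_char {B : Type} (L : BasicLattice B) (U : Set B) :
    ((∀ x y, x ∈ U → y ∈ U → ∃ z ∈ U, L.ple z x ∧ L.ple z y) →
      L.IsPrecFilter {y | ∃ x ∈ U, L.prec x y}) ∧
    (L.IsPrecFilter U ↔ (L.IsPleFilter U ∧ U ⊆ {y | ∃ x ∈ U, L.prec x y})) := by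
  constructor
  · intro hdir
    constructor
    · rintro x y ⟨u, hu, huy⟩ hyx
      exact ⟨u, hu, L.trans huy hyx⟩
    · rintro a b ⟨x, hx, hxa⟩ ⟨y, hy, hyb⟩
      obtain ⟨z, hz, hzx, hzy⟩ := hdir x y hx hy
      have hzi : L.ple z (L.inf x y) := L.le_inf x y z hzx hzy
      have hm : L.prec (L.inf x y) (L.inf a b) := L.mult x a y b hxa hyb
      have hzab : L.prec z (L.inf a b) := L.ple_prec hzi hm
      obtain ⟨c, hzc, hcab⟩ := L.interp z (L.inf a b) hzab
      exact ⟨c, ⟨z, hz, hzc⟩, L.inf_le_left a b c hcab, L.inf_le_right a b c hcab⟩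
  · constructor
    · rintro ⟨hup, hdir⟩
      have hco : U ⊆ {y | ∃ x ∈ U, L.prec x y} := by
        intro u hu
        obtain ⟨z, hz, hzu, _⟩ := hdir u u hu hu
        exact ⟨z, hz, hzu⟩
      refine ⟨⟨?_, ?_⟩, hco⟩
      · intro x y hy hyx
        obtain ⟨z, hz, hzy⟩ := hco hy
        exact hup x z hz (hyx z hzy)
      · intro x y hx hy
        obtain ⟨z, hz, hzx, hzy⟩ := hdir x y hx hy
        exact ⟨z, hz, fun w hw => L.trans hw hzx, fun w hw => L.trans hw hzy⟩
    · rintro ⟨⟨hup, hdir⟩, hco⟩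
      constructor
      · intro x y hy hyx
        exact hup x y hy (fun w hw => L.trans hw hyx)
      · intro x y hx hy
        obtain ⟨z, hz, hzx, hzy⟩ := hdir x y hx hy
        obtain ⟨u, hu, huz⟩ := hco hz
        exact ⟨u, hu, hzx u huz, hzy u huz⟩
end

section
/- In a basic lattice B, for a non-empty proper ≺-filter U ⊊ B, the following are equivalent: (1) U is a ≺-ultrafilter (maximal among proper ≺-filters); (2) B∖U is a ⪯-ideal (i.e. downward ⪯-closed and closed under joins of pairs); (3) B∖U = {y ∈ B : ∀x ≺ y, ∃w ∈ U with w ∧ x = 0}. -/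
namespace BasicLattice
variable {B : Type} (L : BasicLattice B)

lemma ple_refl (x : B) : L.ple x x := fun _ h => h

lemma ple_of_prec {x y : B} (h : L.prec x y) : L.ple x y := fun _ hz => L.trans hz h

lemma ple_trans {x y z : B} (h1 : L.ple x y) (h2 : L.ple y z) : L.ple x z :=
  fun w hw => h2 w (h1 w hw)

lemma prec_of_prec_of_ple {x y z : B} (h1 : L.prec x y) (h2 : L.ple y z) : L.prec x z :=
  h2 x h1

lemma eq_zero_of_ple_zero {x : B} (h : L.ple x L.zero) : x = L.zero :=
  L.antisymm x L.zero h (fun z hz => L.trans hz (L.min x))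

lemma eq_zero_of_prec_zero {x : B} (h : L.prec x L.zero) : x = L.zero :=
  L.eq_zero_of_ple_zero (L.ple_of_prec h)

lemma inf_ple_left (x y : B) : L.ple (L.inf x y) x := fun z hz => L.inf_le_left x y z hz

lemma inf_ple_right (x y : B) : L.ple (L.inf x y) y := fun z hz => L.inf_le_right x y z hz

lemma ple_inf {x y w : B} (h1 : L.ple w x) (h2 : L.ple w y) : L.ple w (L.inf x y) :=
  fun z hz => L.le_inf x y w h1 h2 z hz

lemma ple_sup_left (x y : B) : L.ple x (L.sup x y) := fun z hz => L.le_sup_left x y z hz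

lemma ple_sup_right (x y : B) : L.ple y (L.sup x y) := fun z hz => L.le_sup_right x y z hz

lemma sup_ple {x y w : B} (h1 : L.ple x w) (h2 : L.ple y w) : L.ple (L.sup x y) w :=
  fun z hz => L.sup_le x y w h1 h2 z hz

lemma inf_self (x : B) : L.inf x x = x :=
  L.antisymm _ _ (L.inf_ple_left x x) (L.ple_inf (L.ple_refl x) (L.ple_refl x))

lemma sup_zero_zero : L.sup L.zero L.zero = L.zero :=
  L.antisymm _ _ (L.sup_ple (L.ple_refl _) (L.ple_refl _)) (L.ple_sup_left _ _)

variable {U : Set B}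

lemma mem_of_mem_ple (hfil : L.IsPrecFilter U) {u c : B} (hu : u ∈ U) (h : L.ple u c) :
    c ∈ U := by
  obtain ⟨z, hzU, hz1, _⟩ := hfil.2 u u hu hu
  exact hfil.1 c z hzU (h z hz1)

lemma inf_mem (hfil : L.IsPrecFilter U) {w1 w2 : B} (h1 : w1 ∈ U) (h2 : w2 ∈ U) :
    L.inf w1 w2 ∈ U := by
  obtain ⟨z, hzU, hz1, hz2⟩ := hfil.2 w1 w2 h1 h2
  exact L.mem_of_mem_ple hfil hzU (L.ple_inf (L.ple_of_prec hz1) (L.ple_of_prec hz2))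

lemma zero_not_mem (hfil : L.IsPrecFilter U) (hproper : U ≠ Set.univ) : L.zero ∉ U := by
  intro h0
  apply hproper
  ext a
  simp only [Set.mem_univ, iff_true]
  exact hfil.1 a L.zero h0 (L.min a)

lemma not_mem_of_D (hfil : L.IsPrecFilter U) (hproper : U ≠ Set.univ) {y : B}
    (hy : ∀ x, L.prec x y → ∃ w ∈ U, L.inf w x = L.zero) : y ∉ U := by
  intro hyU
  obtain ⟨z, hzU, hz, _⟩ := hfil.2 y y hyU hyU
  obtain ⟨w, hwU, hw0⟩ := hy z hz
  obtain ⟨v, hvU, hv1, hv2⟩ := hfil.2 w z hwU hzU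
  have hv0 : v = L.zero := by
    apply L.eq_zero_of_ple_zero
    have h := L.ple_inf (L.ple_of_prec hv1) (L.ple_of_prec hv2)
    rwa [hw0] at h
  exact L.zero_not_mem hfil hproper (hv0 ▸ hvU)

lemma compl_down (hfil : L.IsPrecFilter U) {x y : B} (hy : y ∉ U) (hxy : L.ple x y) :
    x ∉ U := fun hxU => hy (L.mem_of_mem_ple hfil hxU hxy)

lemma exists_disjoint_of_ideal (hfil : L.IsPrecFilter U) (hne : U.Nonempty)
    (hsup : ∀ a b, a ∉ U → b ∉ U → L.sup a b ∉ U)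
    {x y : B} (hy : y ∉ U) (hxy : L.prec x y) : ∃ w ∈ U, L.inf w x = L.zero := by
  obtain ⟨u, hu⟩ := hne
  obtain ⟨e, he⟩ := L.cofin y
  have hyc : L.prec y (L.sup e u) := L.prec_of_prec_of_ple he (L.ple_sup_left e u)
  have hcU : L.sup e u ∈ U := L.mem_of_mem_ple hfil hu (L.ple_sup_right e u)
  obtain ⟨w, hw0, hwc⟩ := L.compl x y (L.sup e u) hxy hyc
  refine ⟨w, ?_, hw0⟩
  by_contra hwU
  exact hsup w y hwU hy (by rw [hwc]; exact hcU)

lemma sup_not_mem_of_D (hfil : L.IsPrecFilter U) (hproper : U ≠ Set.univ)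
    (hD : ∀ y, y ∉ U → ∀ x, L.prec x y → ∃ w ∈ U, L.inf w x = L.zero)
    {a b : B} (ha : a ∉ U) (hb : b ∉ U) : L.sup a b ∉ U := by
  apply L.not_mem_of_D hfil hproper
  intro z hz
  obtain ⟨a', b', ha', hb', rfl⟩ := L.decomp a b z hz
  obtain ⟨w1, hw1U, hw1⟩ := hD a ha a' ha'
  obtain ⟨w2, hw2U, hw2⟩ := hD b hb b' hb'
  obtain ⟨w, hwU, hwa, hwb⟩ := hfil.2 w1 w2 hw1U hw2U
  refine ⟨w, hwU, ?_⟩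
  apply L.eq_zero_of_ple_zero
  intro t ht
  have htw : L.prec t w := L.inf_le_left _ _ t ht
  have hts : L.prec t (L.sup a' b') := L.inf_le_right _ _ t ht
  obtain ⟨p, q, hp, hq, rfl⟩ := L.decomp a' b' t hts
  have hp0 : p = L.zero := by
    apply L.eq_zero_of_ple_zero
    have h1 : L.ple p w1 :=
      L.ple_trans (L.ple_trans (L.ple_sup_left p q) (L.ple_of_prec htw)) (L.ple_of_prec hwa)
    have h := L.ple_inf h1 (L.ple_of_prec hp)
    rwa [hw1] at h
  have hq0 : q = L.zero := by
    apply L.eq_zero_of_ple_zero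
    have h1 : L.ple q w2 :=
      L.ple_trans (L.ple_trans (L.ple_sup_right p q) (L.ple_of_prec htw)) (L.ple_of_prec hwb)
    have h := L.ple_inf h1 (L.ple_of_prec hq)
    rwa [hw2] at h
  rw [hp0, hq0, L.sup_zero_zero]
  exact L.min _

lemma ultra_of_D (hfil : L.IsPrecFilter U) (hproper : U ≠ Set.univ)
    (hD : ∀ y, y ∉ U → ∀ x, L.prec x y → ∃ w ∈ U, L.inf w x = L.zero) :
    L.IsUltra U := by
  refine ⟨hfil, hproper, ?_⟩
  intro V hV hVproper hUV
  apply Set.Subset.antisymm hUV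
  intro v hvV
  by_contra hvU
  obtain ⟨z, hzV, hzv, _⟩ := hV.2 v v hvV hvV
  obtain ⟨w, hwU, hw0⟩ := hD v hvU z hzv
  obtain ⟨s, hsV, hs1, hs2⟩ := hV.2 w z (hUV hwU) hzV
  have hs0 : s = L.zero := by
    apply L.eq_zero_of_ple_zero
    have h := L.ple_inf (L.ple_of_prec hs1) (L.ple_of_prec hs2)
    rwa [hw0] at h
  exact L.zero_not_mem hV hVproper (hs0 ▸ hsV)


lemma exists_disjoint_of_ultra (hne : U.Nonempty) (hu : L.IsUltra U)
    {x y : B} (hy : y ∉ U) (hxy : L.prec x y) : ∃ w ∈ U, L.inf w x = L.zero := by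
  obtain ⟨hfil, hproper, hmax⟩ := hu
  by_contra hcon
  push_neg at hcon
  set V : Set B := {v | ∃ w ∈ U, ∃ t, L.prec x t ∧ L.prec (L.inf w t) v} with hVdef
  have hUV : U ⊆ V := by
    intro w hw
    obtain ⟨w', hw'U, hw'1, _⟩ := hfil.2 w w hw hw
    obtain ⟨t, ht⟩ := L.cofin x
    obtain ⟨t', ht'⟩ := L.cofin t
    exact ⟨w', hw'U, t, ht,
      L.prec_of_prec_of_ple (L.mult w' w t t' hw'1 ht') (L.inf_ple_left w t')⟩
  have hyV : y ∈ V := by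
    obtain ⟨u, huU⟩ := hne
    obtain ⟨w', hw'U, hw'1, _⟩ := hfil.2 u u huU huU
    obtain ⟨m, hm1, hm2⟩ := L.interp x y hxy
    exact ⟨w', hw'U, m, hm1,
      L.prec_of_prec_of_ple (L.mult w' u m y hw'1 hm2) (L.inf_ple_right u y)⟩
  have hVfil : L.IsPrecFilter V := by
    constructor
    · rintro a b ⟨w, hwU, t, hxt, hb⟩ hba
      exact ⟨w, hwU, t, hxt, L.trans hb hba⟩
    · rintro v1 v2 ⟨w1, hw1U, t1, hxt1, h1⟩ ⟨w2, hw2U, t2, hxt2, h2⟩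
      have huU : L.inf w1 w2 ∈ U := L.inf_mem hfil hw1U hw2U
      have hxt : L.prec x (L.inf t1 t2) := by
        have h := L.mult x t1 x t2 hxt1 hxt2
        rwa [L.inf_self] at h
      obtain ⟨w', hw'U, hw'1, _⟩ := hfil.2 _ _ huU huU
      obtain ⟨t', hxt', ht't⟩ := L.interp x (L.inf t1 t2) hxt
      have hz : L.prec (L.inf w' t') (L.inf (L.inf w1 w2) (L.inf t1 t2)) :=
        L.mult _ _ _ _ hw'1 ht't
      refine ⟨L.inf w' t', ?_, ?_, ?_⟩
      · obtain ⟨w'', hw''U, hw''1, _⟩ := hfil.2 _ _ hw'U hw'U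
        obtain ⟨t'', hxt'', ht''⟩ := L.interp x t' hxt'
        exact ⟨w'', hw''U, t'', hxt'', L.mult w'' w' t'' t' hw''1 ht''⟩
      · have hple : L.ple (L.inf (L.inf w1 w2) (L.inf t1 t2)) (L.inf w1 t1) :=
          L.ple_inf (L.ple_trans (L.inf_ple_left _ _) (L.inf_ple_left w1 w2))
                    (L.ple_trans (L.inf_ple_right _ _) (L.inf_ple_left t1 t2))
        exact L.trans (L.prec_of_prec_of_ple hz hple) h1
      · have hple : L.ple (L.inf (L.inf w1 w2) (L.inf t1 t2)) (L.inf w2 t2) :=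
          L.ple_inf (L.ple_trans (L.inf_ple_left _ _) (L.inf_ple_right w1 w2))
                    (L.ple_trans (L.inf_ple_right _ _) (L.inf_ple_right t1 t2))
        exact L.trans (L.prec_of_prec_of_ple hz hple) h2
  have hVproper : V ≠ Set.univ := by
    intro hVu
    have h0V : L.zero ∈ V := by rw [hVu]; exact Set.mem_univ _
    obtain ⟨w, hwU, t, hxt, h0⟩ := h0V
    have ht0 : L.inf w t = L.zero := L.eq_zero_of_prec_zero h0
    apply hcon w hwU
    apply L.eq_zero_of_ple_zero
    have h : L.ple (L.inf w x) (L.inf w t) :=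
      L.ple_inf (L.inf_ple_left w x)
        (L.ple_trans (L.inf_ple_right w x) (L.ple_of_prec hxt))
    rwa [ht0] at h
  have hEq := hmax V hVfil hVproper hUV
  exact hy (by rw [hEq]; exact hyV)

end BasicLattice

/-- Characterizations of ≺-ultrafilters in a basic lattice: for a non-empty proper
≺-filter U the following are equivalent: U is a ≺-ultrafilter; the complement of U
is a ⪯-ideal; the complement of U is the set of y such that every x ≺ y is
disjoint from some element of U. -/
theorem precUltrafilter_characterizations {B : Type} (L : BasicLattice B)
    (U : Set B) (hne : U.Nonempty) (hfil : L.IsPrecFilter U) (hproper : U ≠ Set.univ) :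
    (L.IsUltra U ↔
      ((∀ x y, y ∈ Uᶜ → L.ple x y → x ∈ Uᶜ) ∧
       (∀ x y, x ∈ Uᶜ → y ∈ Uᶜ → L.sup x y ∈ Uᶜ))) ∧
    (L.IsUltra U ↔
      Uᶜ = {y | ∀ x, L.prec x y → ∃ w ∈ U, L.inf w x = L.zero}) := by
  constructor
  · constructor
    · intro hu
      constructor
      · intro x y hy hxy
        exact L.compl_down hfil hy hxy
      · intro a b ha hb
        exact L.sup_not_mem_of_D hfil hproper
          (fun y hy x hx => L.exists_disjoint_of_ultra hne hu hy hx) ha hb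
    · rintro ⟨_, hsup⟩
      exact L.ultra_of_D hfil hproper
        (fun y hy x hx => L.exists_disjoint_of_ideal hfil hne hsup hy hx)
  · constructor
    · intro hu
      ext y
      simp only [Set.mem_compl_iff, Set.mem_setOf_eq]
      constructor
      · intro hy x hx
        exact L.exists_disjoint_of_ultra hne hu hy hx
      · intro h
        exact L.not_mem_of_D hfil hproper h
    · intro heq
      apply L.ultra_of_D hfil hproper
      intro y hy x hx
      have hyc : y ∈ Uᶜ := hy
      rw [heq] at hyc
      exact hyc x hx
end

section
/- Let B be a p0set (poset with minimum 0), B′ = B∖{0} with the Alexandroff topology whose closed sets are the upward-closed sets, and ρ : B → ℛ𝒪(B′) given by ρ(x) = interior(closure({y ≠ 0 : y ⪯ x})). Then for all finite F, G ⊆ B: F ⪅ G if and only if ⋀ρ[F] ⊆ ⋁ρ[G], where F ⪅ G means every common lower bound of F is 0 or has a nonzero common lower bound with some element of G. -/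
variable {B : Type} [PartialOrder B] [OrderBot B]

/-- B' = B ∖ {0}. -/
def Bp (B : Type) [PartialOrder B] [OrderBot B] : Type := {x : B // x ≠ ⊥}

/-- The Alexandroff topology on B' whose closed sets are the upward closed sets,
i.e. whose open sets are the downward closed sets. -/
instance : TopologicalSpace (Bp B) where
  IsOpen S := ∀ x ∈ S, ∀ y : Bp B, y.1 ≤ x.1 → y ∈ S
  isOpen_univ := fun _ _ _ _ => trivial
  isOpen_inter := fun _ _ hS hT x hx y hy =>
    ⟨hS x hx.1 y hy, hT x hx.2 y hy⟩
  isOpen_sUnion := fun _ h x hx y hy => by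
    obtain ⟨S, hS, hxS⟩ := hx
    exact ⟨S, hS, h S hS x hxS y hy⟩

/-- ρ(x) = interior(closure({y ≠ 0 : y ⪯ x})) ∈ ℛ𝒪(B'). -/
def rho (x : B) : Set (Bp B) := interior (closure {y : Bp B | y.1 ≤ x})

lemma down_of_open {S : Set (Bp B)} (hS : IsOpen S) {x y : Bp B}
    (hx : x ∈ S) (hy : y.1 ≤ x.1) : y ∈ S := hS x hx y hy

lemma mem_closure_iff'' {S : Set (Bp B)} {x : Bp B} :
    x ∈ closure S ↔ ∃ y ∈ S, y.1 ≤ x.1 := by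
  constructor
  · intro hx
    by_contra h
    push_neg at h
    have hcl : IsClosed {z : Bp B | ∃ y ∈ S, y.1 ≤ z.1} := by
      rw [← isOpen_compl_iff]
      intro a ha b hb
      simp only [Set.mem_compl_iff, Set.mem_setOf_eq] at *
      push_neg at ha ⊢
      exact fun y hy hle => ha y hy (hle.trans hb)
    have hsub : closure S ⊆ {z : Bp B | ∃ y ∈ S, y.1 ≤ z.1} :=
      closure_minimal (fun y hy => ⟨y, hy, le_refl _⟩) hcl
    obtain ⟨y, hy, hle⟩ := hsub hx
    exact h y hy hle
  · rintro ⟨y, hy, hle⟩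
    by_contra hx
    have hop : IsOpen (closure S)ᶜ := isOpen_compl_iff.2 isClosed_closure
    exact down_of_open hop hx hle (subset_closure hy)

lemma mem_interior_iff'' {S : Set (Bp B)} {x : Bp B} :
    x ∈ interior S ↔ ∀ y : Bp B, y.1 ≤ x.1 → y ∈ S := by
  constructor
  · intro hx y hy
    exact interior_subset (down_of_open isOpen_interior hx hy)
  · intro h
    have hop : IsOpen {z : Bp B | ∀ y : Bp B, y.1 ≤ z.1 → y ∈ S} :=
      fun a ha b hb y hy => ha y (hy.trans hb)
    have hsub : {z : Bp B | ∀ y : Bp B, y.1 ≤ z.1 → y ∈ S} ⊆ S := by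
      intro z hz
      exact hz z le_rfl
    exact interior_maximal hsub hop h

lemma mem_rho_iff {b : B} {x : Bp B} :
    x ∈ rho b ↔ ∀ v : Bp B, v.1 ≤ x.1 → ∃ z : Bp B, z.1 ≤ v.1 ∧ z.1 ≤ b := by
  simp only [rho, mem_interior_iff'', mem_closure_iff'', Set.mem_setOf_eq]
  constructor
  · intro h v hv
    obtain ⟨z, hz1, hz2⟩ := h v hv
    exact ⟨z, hz2, hz1⟩
  · intro h v hv
    obtain ⟨z, hz1, hz2⟩ := h v hv
    exact ⟨z, hz2, hz1⟩

lemma le_mem_rho {b : B} {x : Bp B} (h : x.1 ≤ b) : x ∈ rho b :=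
  mem_rho_iff.2 fun v hv => ⟨v, le_rfl, hv.trans h⟩

lemma rho_down {b : B} {x y : Bp B} (hx : x ∈ rho b) (h : y.1 ≤ x.1) : y ∈ rho b :=
  mem_rho_iff.2 fun v hv => mem_rho_iff.1 hx v (hv.trans h)

/-- Key claim: a member of ⋂ ρ[F] has a nonzero lower bound of F below it. -/
lemma exists_lb {F : Finset B} {v : Bp B} (hv : v ∈ ⋂ y ∈ F, rho y) :
    ∃ u : Bp B, u.1 ≤ v.1 ∧ ∀ b ∈ F, u.1 ≤ b := by
  classical
  induction F using Finset.induction_on generalizing v with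
  | empty => exact ⟨v, le_rfl, fun b hb => absurd hb (Finset.notMem_empty b)⟩
  | insert _ _ hb ih =>
    rename_i a F
    simp only [Set.mem_iInter, Finset.mem_insert] at hv
    obtain ⟨u, hu1, hu2⟩ := ih (v := v) (by
      simp only [Set.mem_iInter]; exact fun b hbF => hv b (Or.inr hbF))
    have hua : u ∈ rho a := rho_down (hv a (Or.inl rfl)) hu1
    obtain ⟨z, hz1, hz2⟩ := mem_rho_iff.1 hua u le_rfl
    exact ⟨z, hz1.trans hu1, fun b hbF => by
      rcases Finset.mem_insert.1 hbF with h | h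
      · exact h ▸ hz2
      · exact hz1.trans (hu2 b h)⟩

/-- For finite F, G ⊆ B, the covering relation F ⪅ G holds iff
⋀ρ[F] ⊆ ⋁ρ[G] in the regular open sets of B'. -/
theorem cover_iff_rho {B : Type} [PartialOrder B] [OrderBot B] (F G : Finset B) :
    (∀ x : B, (∀ y ∈ F, x ≤ y) →
        x = ⊥ ∨ ∃ y ∈ G, ∃ z : B, z ≠ ⊥ ∧ z ≤ x ∧ z ≤ y)
    ↔ (⋂ y ∈ F, rho y) ⊆ interior (closure (⋃ y ∈ G, rho y)) := by
  constructor
  · intro h w hw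
    rw [mem_interior_iff'']
    intro v hv
    have hv' : v ∈ ⋂ y ∈ F, rho y := by
      simp only [Set.mem_iInter] at hw ⊢
      exact fun b hb => rho_down (hw b hb) hv
    obtain ⟨u, hu1, hu2⟩ := exists_lb hv'
    rcases h u.1 hu2 with h0 | ⟨g, hgG, z, hz0, hzu, hzg⟩
    · exact absurd h0 u.2
    · rw [mem_closure_iff'']
      refine ⟨⟨z, hz0⟩, ?_, le_trans hzu hu1⟩
      exact Set.mem_biUnion hgG (le_mem_rho hzg)
  · intro h x hx
    by_cases hx0 : x = ⊥
    · exact Or.inl hx0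
    · right
      have hmem : @id (Bp B) ⟨x, hx0⟩ ∈ ⋂ y ∈ F, rho y := by
        simp only [Set.mem_iInter]
        exact fun b hb => le_mem_rho (hx b hb)
      have := interior_subset (h hmem)
      rw [mem_closure_iff''] at this
      obtain ⟨u, huU, hux⟩ := this
      obtain ⟨g, hgG, hug⟩ := by
        simpa only [Set.mem_iUnion, exists_prop] using huU
      obtain ⟨z, hz1, hz2⟩ := mem_rho_iff.1 hug u le_rfl
      exact ⟨g, hgG, z.1, z.2, hz1.trans hux, hz2⟩
end

section
/- For generalized Boolean algebras A and B and a map β : B → A, the following are equivalent: (1) β is tightish (β(0) = 0 and β preserves the covering relation F ⪅ G for all finite nonempty F and finite G); (2) β is a lattice homomorphism with β(0) = 0; (3) β preserves ∧, ∨ and relative complement ∖. -/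
/-- The covering relation on subsets of a p0set: C ⪅ D iff every common lower
bound of C is 0 or has a nonzero common lower bound with some element of D. -/
def Cov {A : Type} [Preorder A] [OrderBot A] (C D : Set A) : Prop :=
  ∀ x : A, (∀ y ∈ C, x ≤ y) → x = ⊥ ∨ ∃ y ∈ D, ∃ z : A, z ≠ ⊥ ∧ z ≤ x ∧ z ≤ y

/-- In a generalized Boolean algebra, the covering relation on finite sets
(with nonempty left side) is equivalent to `inf F ≤ sup G`. -/
lemma cov_iff_finset {A : Type} [GeneralizedBooleanAlgebra A] (F G : Finset A)
    (hF : F.Nonempty) : Cov (F : Set A) (G : Set A) ↔ F.inf' hF id ≤ G.sup id := by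
  constructor
  · intro h
    set f := F.inf' hF id with hf
    set s := G.sup id with hs
    have hx : ∀ y ∈ (F : Set A), f \ s ≤ y := fun y hy =>
      le_trans sdiff_le (Finset.inf'_le id hy)
    rcases h _ hx with h0 | ⟨y, hy, z, hz, hzx, hzy⟩
    · exact sdiff_eq_bot_iff.mp h0
    · exfalso
      apply hz
      have hzs : z ≤ s := hzy.trans (Finset.le_sup (f := id) (by exact_mod_cast hy))
      have : z ≤ (f \ s) ⊓ s := le_inf hzx hzs
      simpa using this.trans (disjoint_sdiff_self_left (x := s) (y := f)).le_bot
  · intro h x hx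
    by_cases hx0 : x = ⊥
    · exact Or.inl hx0
    right
    have hxf : x ≤ F.inf' hF id := Finset.le_inf' hF id fun y hy => hx y (by exact_mod_cast hy)
    have hxs : x ≤ G.sup id := hxf.trans h
    have hex : ∃ y ∈ G, x ⊓ y ≠ ⊥ := by
      by_contra hc
      push_neg at hc
      apply hx0
      have hdist : x ⊓ G.sup id = G.sup fun y => x ⊓ y :=
        Finset.sup_inf_distrib_left G id x
      have : x = G.sup fun y => x ⊓ y := by
        rw [← hdist, inf_eq_left.mpr hxs]
      rw [this]
      exact le_bot_iff.mp (Finset.sup_le fun y hy => (hc y hy).le)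
    obtain ⟨y, hy, hne⟩ := hex
    exact ⟨y, by exact_mod_cast hy, x ⊓ y, hne, inf_le_left, inf_le_right⟩

/-- For generalized Boolean algebras A, B and β : B → A, the following are
equivalent: β is tightish (β 0 = 0 and β preserves the covering relation on
finite sets with nonempty left side); β is a lattice homomorphism with β 0 = 0;
β is a generalized Boolean homomorphism (preserves ∧, ∨ and ∖). -/
theorem tightish_iff_latticeHom_iff_genBoolHom {A B : Type}
    [GeneralizedBooleanAlgebra A] [GeneralizedBooleanAlgebra B] (β : B → A) :
    ((β ⊥ = ⊥ ∧ ∀ F G : Set B, F.Finite → G.Finite → F.Nonempty →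
        Cov F G → Cov (β '' F) (β '' G))
      ↔ (β ⊥ = ⊥ ∧ ∀ x y : B, β (x ⊓ y) = β x ⊓ β y ∧ β (x ⊔ y) = β x ⊔ β y)) ∧
    ((β ⊥ = ⊥ ∧ ∀ F G : Set B, F.Finite → G.Finite → F.Nonempty →
        Cov F G → Cov (β '' F) (β '' G))
      ↔ (∀ x y : B, β (x ⊓ y) = β x ⊓ β y ∧ β (x ⊔ y) = β x ⊔ β y ∧
          β (x \ y) = β x \ β y)) := by
  have h12 : (β ⊥ = ⊥ ∧ ∀ F G : Set B, F.Finite → G.Finite → F.Nonempty →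
        Cov F G → Cov (β '' F) (β '' G))
      ↔ (β ⊥ = ⊥ ∧ ∀ x y : B, β (x ⊓ y) = β x ⊓ β y ∧ β (x ⊔ y) = β x ⊔ β y) := by
    constructor
    · rintro ⟨hb, hc⟩
      classical
      refine ⟨hb, ?_⟩
      -- monotonicity from covering preservation
      have mono : ∀ a b : B, a ≤ b → β a ≤ β b := by
        intro a b hab
        have h1 : Cov ({a} : Set B) ({b} : Set B) := by
          have := (cov_iff_finset ({a} : Finset B) ({b} : Finset B) ⟨a, by simp⟩).mpr
            (by simpa using hab)
          simpa using this
        have h2 := hc {a} {b} (Set.finite_singleton a) (Set.finite_singleton b) ⟨a, rfl⟩ h1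
        have h3 : Cov (({β a} : Finset A) : Set A) (({β b} : Finset A) : Set A) := by
          simpa using h2
        have := (cov_iff_finset ({β a} : Finset A) ({β b} : Finset A) ⟨β a, by simp⟩).mp h3
        simpa using this
      intro x y
      constructor
      · -- inf
        refine le_antisymm (le_inf (mono _ _ inf_le_left) (mono _ _ inf_le_right)) ?_
        have h1 : Cov ({x, y} : Set B) ({x ⊓ y} : Set B) := by
          have := (cov_iff_finset ({x, y} : Finset B) ({x ⊓ y} : Finset B) ⟨x, by simp⟩).mpr
            (by simp)
          simpa using this
        have h2 := hc {x, y} {x ⊓ y} (Set.toFinite _) (Set.toFinite _) ⟨x, by simp⟩ h1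
        have h3 : Cov (({β x, β y} : Finset A) : Set A) (({β (x ⊓ y)} : Finset A) : Set A) := by
          have himg : β '' {x, y} = ({β x, β y} : Set A) := by
            simp [Set.image_insert_eq]
          have himg2 : β '' {x ⊓ y} = ({β (x ⊓ y)} : Set A) := by simp
          rw [himg, himg2] at h2
          simpa using h2
        have := (cov_iff_finset ({β x, β y} : Finset A) ({β (x ⊓ y)} : Finset A)
          ⟨β x, by simp⟩).mp h3
        simpa using this
      · -- sup
        refine le_antisymm ?_ (sup_le (mono _ _ le_sup_left) (mono _ _ le_sup_right))
        have h1 : Cov ({x ⊔ y} : Set B) ({x, y} : Set B) := by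
          have := (cov_iff_finset ({x ⊔ y} : Finset B) ({x, y} : Finset B) ⟨x ⊔ y, by simp⟩).mpr
            (by simp)
          simpa using this
        have h2 := hc {x ⊔ y} {x, y} (Set.toFinite _) (Set.toFinite _) ⟨x ⊔ y, by simp⟩ h1
        have h3 : Cov (({β (x ⊔ y)} : Finset A) : Set A) (({β x, β y} : Finset A) : Set A) := by
          have himg : β '' {x, y} = ({β x, β y} : Set A) := by
            simp [Set.image_insert_eq]
          have himg2 : β '' {x ⊔ y} = ({β (x ⊔ y)} : Set A) := by simp
          rw [himg, himg2] at h2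
          simpa using h2
        have := (cov_iff_finset ({β (x ⊔ y)} : Finset A) ({β x, β y} : Finset A)
          ⟨β (x ⊔ y), by simp⟩).mp h3
        simpa using this
    · rintro ⟨hb, h⟩
      refine ⟨hb, ?_⟩
      have mono : ∀ a b : B, a ≤ b → β a ≤ β b := by
        intro a b hab
        have h1 := (h a b).1
        rw [inf_eq_left.mpr hab] at h1
        rw [h1]
        exact inf_le_right
      intro F G hF hG hne hcv
      classical
      set F' := hF.toFinset with hF'
      set G' := hG.toFinset with hG'
      have hne' : F'.Nonempty := by
        rw [hF']
        exact hF.toFinset_nonempty.mpr hne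
      have hcv' : Cov (F' : Set B) (G' : Set B) := by
        rw [hF', hG', hF.coe_toFinset, hG.coe_toFinset]
        exact hcv
      have hle := (cov_iff_finset F' G' hne').mp hcv'
      have hblef := mono _ _ hle
      have hinf : β (F'.inf' hne' id) = (F'.image β).inf' (hne'.image β) id := by
        rw [Finset.apply_inf'_eq_inf'_comp hne' β fun x y => (h x y).1]
        rw [Finset.inf'_image]
        rfl
      have hsup : β (G'.sup id) = (G'.image β).sup id := by
        rw [Finset.comp_sup_eq_sup_comp β (fun x y => (h x y).2) hb]
        rw [Finset.sup_image]
        rfl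
      rw [hinf, hsup] at hblef
      have := (cov_iff_finset (F'.image β) (G'.image β) (hne'.image β)).mpr hblef
      have himg1 : (↑(F'.image β) : Set A) = β '' F := by
        rw [Finset.coe_image, hF', hF.coe_toFinset]
      have himg2 : (↑(G'.image β) : Set A) = β '' G := by
        rw [Finset.coe_image, hG', hG.coe_toFinset]
      rwa [himg1, himg2] at this
  have h23 : (β ⊥ = ⊥ ∧ ∀ x y : B, β (x ⊓ y) = β x ⊓ β y ∧ β (x ⊔ y) = β x ⊔ β y)
      ↔ (∀ x y : B, β (x ⊓ y) = β x ⊓ β y ∧ β (x ⊔ y) = β x ⊔ β y ∧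
          β (x \ y) = β x \ β y) := by
    constructor
    · rintro ⟨hb, h⟩
      intro x y
      refine ⟨(h x y).1, (h x y).2, ?_⟩
      symm
      apply sdiff_unique
      · rw [← (h x y).1, ← (h (x ⊓ y) (x \ y)).2, sup_inf_sdiff]
      · rw [← (h x y).1, ← (h (x ⊓ y) (x \ y)).1, inf_inf_sdiff, hb]
    · intro h
      have hb : β ⊥ = ⊥ := by
        have := (h ⊥ ⊥).2.2
        simpa using this
      exact ⟨hb, fun x y => ⟨(h x y).1, (h x y).2.1⟩⟩
  exact ⟨h12, h12.trans h23⟩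
end

section
/- Let B be a p0set and β : B → {0,1} a nonzero tightish character. Then the support C = β⁻¹{1} is a filter-like set, and conversely the characteristic function of any maximal centred subset C ⊆ B (every finite F ⊆ C has a nonzero lower bound) is a tight character. -/
/-- A centred subset: every finite subset has a nonzero common lower bound. -/
def Centred {B : Type} [Preorder B] [OrderBot B] (C : Set B) : Prop :=
  ∀ F : Set B, F.Finite → F ⊆ C → ∃ z : B, z ≠ ⊥ ∧ ∀ x ∈ F, z ≤ x

lemma covProp_of {S T : Set Prop} (h : (∀ p ∈ S, p) → ∃ q ∈ T, q) : Cov S T := by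
  intro x hx
  by_cases hxx : x
  · obtain ⟨q, hqT, hq⟩ := h (fun p hp => hx p hp hxx)
    exact Or.inr ⟨q, hqT, True, by simp, fun _ => hxx, fun _ => hq⟩
  · exact Or.inl (by simp [eq_false hxx])

lemma covProp_to {S T : Set Prop} (h : Cov S T) (hall : ∀ p ∈ S, p) :
    ∃ q ∈ T, q := by
  rcases h True (fun y hy => fun _ => hall y hy) with h1 | ⟨q, hqT, z, hz, _, hzq⟩
  · exact absurd h1 (by simp)
  · refine ⟨q, hqT, hzq ?_⟩
    by_contra hz'
    exact hz (by simp [eq_false hz'])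

/-- The support of a nonzero tightish character on a p0set is upward closed and
centred; conversely, the characteristic function of any maximal centred subset
is a tight character. Here characters take values in the p0set Prop = {0,1}. -/
theorem tightish_character_support_and_maximal_centred
    {B : Type} [PartialOrder B] [OrderBot B] :
    (∀ β : B → Prop, ¬ β ⊥ → (∃ x, β x) →
      (∀ F G : Set B, F.Finite → G.Finite → F.Nonempty →
        Cov F G → Cov (β '' F) (β '' G)) →
      ((∀ x y : B, β x → x ≤ y → β y) ∧ Centred {x | β x})) ∧
    (∀ C : Set B, Centred C →
      (∀ D : Set B, C ⊆ D → Centred D → C = D) →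
      (¬ (⊥ ∈ C) ∧ ∀ F G : Set B, F.Finite → G.Finite →
        Cov F G → Cov ((· ∈ C) '' F) ((· ∈ C) '' G))) := by
  constructor
  · rintro β h0 ⟨x0, hx0⟩ ht
    constructor
    · intro x y hx hxy
      have hcov : Cov ({x} : Set B) {y} := by
        intro w hw
        by_cases hwb : w = ⊥
        · exact Or.inl hwb
        · exact Or.inr ⟨y, rfl, w, hwb, le_refl w, (hw x rfl).trans hxy⟩
      have := ht {x} {y} (Set.finite_singleton x) (Set.finite_singleton y)
        ⟨x, rfl⟩ hcov
      obtain ⟨q, hqT, hq⟩ := covProp_to this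
        (by rintro p ⟨a, rfl, rfl⟩; exact hx)
      obtain ⟨b, rfl, rfl⟩ := hqT
      exact hq
    · intro F hF hFsub
      by_contra hc
      push_neg at hc
      rcases F.eq_empty_or_nonempty with rfl | hne
      · obtain ⟨x, hx, -⟩ := hc x0 (fun hb => h0 (hb ▸ hx0))
        exact hx
      · have hcov : Cov F (∅ : Set B) := by
          intro w hw
          by_cases hwb : w = ⊥
          · exact Or.inl hwb
          · obtain ⟨x, hxF, hnle⟩ := hc w hwb
            exact absurd (hw x hxF) hnle
        obtain ⟨q, hqT, _⟩ := covProp_to (ht F ∅ hF Set.finite_empty hne hcov)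
          (by rintro p ⟨a, haF, rfl⟩; exact hFsub haF)
        simp at hqT
  · intro C hC hmax
    constructor
    · intro hbot
      obtain ⟨z, hz, hle⟩ := hC {⊥} (Set.finite_singleton ⊥) (by simpa)
      exact hz (le_bot_iff.mp (hle ⊥ rfl))
    · intro F G hF hG hcov
      apply covProp_of
      intro hall
      have hFC : F ⊆ C := fun x hx => hall (x ∈ C) ⟨x, hx, rfl⟩
      -- claim: some y ∈ G lies in C
      have hclaim : ∃ y ∈ G, y ∈ C := by
        by_contra hno
        push_neg at hno
        -- for each y ∈ G, C ∪ {y} is not centred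
        have key : ∀ y : B, ∃ Fy : Set B, Fy.Finite ∧
            (y ∈ G → (Fy ⊆ C ∪ {y} ∧ ∀ z : B, z ≠ ⊥ → ∃ x ∈ Fy, ¬ z ≤ x)) := by
          intro y
          by_cases hyG : y ∈ G
          · have hnc : ¬ Centred (C ∪ {y}) := by
              intro hcent
              have := hmax (C ∪ {y}) Set.subset_union_left hcent
              exact hno y hyG (this ▸ Set.mem_union_right C rfl)
            unfold Centred at hnc
            push_neg at hnc
            obtain ⟨Fy, hFy, hFysub, hbad⟩ := hnc
            exact ⟨Fy, hFy, fun _ => ⟨hFysub, hbad⟩⟩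
          · exact ⟨∅, Set.finite_empty, fun h => absurd h hyG⟩
        choose Fy hFyfin hFy using key
        set Fstar : Set B := F ∪ ⋃ y ∈ G, (Fy y ∩ C) with hFstar
        have hFstarfin : Fstar.Finite :=
          hF.union (hG.biUnion fun y _ => (hFyfin y).inter_of_left C)
        have hFstarC : Fstar ⊆ C := by
          rintro x (hx | hx)
          · exact hFC hx
          · simp only [Set.mem_iUnion] at hx
            obtain ⟨y, _, _, hxC⟩ := hx
            exact hxC
        obtain ⟨z, hz, hzle⟩ := hC Fstar hFstarfin hFstarC
        rcases hcov z (fun x hx => hzle x (Or.inl hx)) with hzb | ⟨y, hyG, w, hw, hwz, hwy⟩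
        · exact hz hzb
        · obtain ⟨hsub, hbad⟩ := hFy y hyG
          obtain ⟨x, hxFy, hnle⟩ := hbad w hw
          rcases hsub hxFy with hxC | hxy
          · exact hnle (hwz.trans (hzle x (Or.inr (by
              simp only [Set.mem_iUnion]; exact ⟨y, hyG, hxFy, hxC⟩))))
          · exact hnle (hxy ▸ hwy)
      obtain ⟨y, hyG, hyC⟩ := hclaim
      exact ⟨(y ∈ C), ⟨y, hyG, rfl⟩, hyC⟩
end

section
/- Let B be a pseudobasis of compact clopen subsets of a topological space X. Then for all finite families F, G ⊆ B: F ⪅ G (the covering relation w.r.t. inclusion order on B) holds if and only if ⋂F ⊆ ⋃G. -/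
/-- For a pseudobasis B of compact clopen sets and finite F, G ⊆ B, the covering
relation F ⪅ G (with respect to the inclusion order on B, with 0 = ∅) holds iff
⋂F ⊆ ⋃G (with the convention ⋂∅ = X). -/
theorem pseudobasis_cover_iff {X : Type} [TopologicalSpace X]
    (B : Set (Set X))
    (hclopen : ∀ O ∈ B, IsClopen O)
    (hcpt : ∀ O ∈ B, IsCompact O)
    (hempty : (∅ : Set X) ∈ B)
    (hcover : ⋃₀ B = Set.univ)
    (hcoinit : ∀ O : Set X, IsOpen O → O.Nonempty → ∃ N ∈ B, N.Nonempty ∧ N ⊆ O)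
    (hT0 : ∀ x y : X, x ≠ y → ∃ O ∈ B, (x ∈ O ∧ y ∉ O) ∨ (y ∈ O ∧ x ∉ O)) :
    ∀ F G : Set (Set X), F.Finite → G.Finite → F ⊆ B → G ⊆ B →
      ((∀ O ∈ B, (∀ P ∈ F, O ⊆ P) →
          O = ∅ ∨ ∃ N ∈ G, ∃ M ∈ B, M.Nonempty ∧ M ⊆ O ∧ M ⊆ N)
        ↔ ⋂₀ F ⊆ ⋃₀ G) := by
  intro F G hF hG hFB hGB
  constructor
  · intro h x hx
    by_contra hxG
    have hUopen : IsOpen (⋂₀ F ∩ (⋃₀ G)ᶜ) := by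
      apply IsOpen.inter
      · exact Set.Finite.isOpen_sInter hF (fun t ht => (hclopen t (hFB ht)).isOpen)
      · rw [Set.sUnion_eq_biUnion]
        exact (hG.isClosed_biUnion
          (fun t ht => (hclopen t (hGB ht)).isClosed)).isOpen_compl
    obtain ⟨N, hNB, hNne, hNsub⟩ := hcoinit _ hUopen ⟨x, hx, hxG⟩
    have hNF : ∀ P ∈ F, N ⊆ P := fun P hP y hy =>
      (hNsub hy).1 P hP
    rcases h N hNB hNF with hN0 | ⟨N', hN', M, hMB, ⟨y, hy⟩, hMN, hMN'⟩
    · exact hNne.ne_empty hN0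
    · exact (hNsub (hMN hy)).2 ⟨N', hN', hMN' hy⟩
  · intro h O hOB hOF
    rcases Set.eq_empty_or_nonempty O with h0 | ⟨x, hx⟩
    · exact Or.inl h0
    · right
      have hxF : x ∈ ⋂₀ F := fun P hP => hOF P hP hx
      obtain ⟨N, hNG, hxN⟩ := h hxF
      have hopen : IsOpen (O ∩ N) :=
        ((hclopen O hOB).isOpen).inter ((hclopen N (hGB hNG)).isOpen)
      obtain ⟨M, hMB, hMne, hMsub⟩ := hcoinit _ hopen ⟨x, hx, hxN⟩
      exact ⟨N, hNG, M, hMB, hMne, fun y hy => (hMsub hy).1, fun y hy => (hMsub hy).2⟩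
end
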